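/- Let (X,d) be a metric space whose underlying set X is finite and nonempty, and suppose the basic geodesic graph G of (X,d) is a tree (connected and acyclic). Then G is the unique minimum spanning tree of the complete graph on X with edge weights d: for every tree T on vertex set X whose edge set differs from the set of basic edges, the total weight ∑_{{a,b} ∈ E(T)} d(a,b) is strictly greater than ∑_{{a,b} basic} d(a,b). -/

import Mathlib

/-- A chain of intermediate points witnessing that the pair `{x, x'}` is non-basic:
`k ≥ 1` pairwise distinct intermediate points, each different from `x` and `x'`,
along which the distances sum to `dist x x'`. -/
def IsNonBasicChain {X : Type*} [MetricSpace X] (x x' : X) : Prop :=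
  ∃ (k : ℕ) (p : Fin (k + 2) → X), 1 ≤ k ∧ Function.Injective p ∧
    p 0 = x ∧ p (Fin.last (k + 1)) = x' ∧
    dist x x' = ∑ i : Fin (k + 1), dist (p i.castSucc) (p i.succ)

/-- The unordered pair `{x, x'}` is a non-basic edge. -/
def IsNonBasicEdge {X : Type*} [MetricSpace X] (x x' : X) : Prop :=
  IsNonBasicChain x x' ∨ IsNonBasicChain x' x

/-- The unordered pair `{x, x'}` is a basic edge. -/
def IsBasicEdge {X : Type*} [MetricSpace X] (x x' : X) : Prop :=
  x ≠ x' ∧ ¬ IsNonBasicEdge x x'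

/-- The basic geodesic graph: the simple graph on `X` whose edges are the basic edges. -/
def basicGeodesicGraph (X : Type*) [MetricSpace X] : SimpleGraph X where
  Adj x y := IsBasicEdge x y
  symm := ⟨fun x y ⟨h1, h2⟩ => ⟨h1.symm, fun h => h2 h.symm⟩⟩
  loopless := ⟨fun x ⟨h1, _⟩ => h1 rfl⟩

namespace MstAux

open SimpleGraph Finset

variable {X : Type*} [MetricSpace X] [Fintype X]

noncomputable def dw : Sym2 X → ℝ := Sym2.lift ⟨dist, fun a b => dist_comm a b⟩

noncomputable def W (S : SimpleGraph X) : ℝ := ∑ e ∈ S.edgeSet.toFinite.toFinset, dw e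

lemma finsum_eq_W (S : SimpleGraph X) :
    (∑ᶠ e ∈ S.edgeSet, Sym2.lift ⟨dist, fun a b => dist_comm a b⟩ e) = W S := by
  rw [W, ← finsum_mem_coe_finset, Set.Finite.coe_toFinset]
  rfl

lemma dw_pos {S : SimpleGraph X} {e : Sym2 X} (he : e ∈ S.edgeSet) : 0 < dw e := by
  induction e using Sym2.ind with
  | _ u v =>
    rw [SimpleGraph.mem_edgeSet] at he
    simpa [dw] using dist_pos.2 he.ne

lemma dw_nonneg (e : Sym2 X) : 0 ≤ dw e := by
  induction e using Sym2.ind with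
  | _ u v => simpa [dw] using dist_nonneg

/-- Flip lemma. -/
lemma exists_flip {n : ℕ} (Q : Fin (n + 1) → Prop) (h0 : Q 0) (hl : ¬ Q (Fin.last n)) :
    ∃ i : Fin n, Q i.castSucc ∧ ¬ Q i.succ := by
  by_contra h
  push_neg at h
  exact hl (Fin.induction h0 (fun i ih => h i ih) (Fin.last n))

/-- Dichotomy: from a walk `v → w` in `S`, in `S` minus the edge `{x,x'}` the
vertex `v` reaches `w`, or reaches `x`, or reaches `x'`. -/
lemma reach_or {S : SimpleGraph X} (x x' : X) {v w : X} (p : S.Walk v w) :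
    (S \ fromEdgeSet {s(x, x')}).Reachable v w ∨
      (S \ fromEdgeSet {s(x, x')}).Reachable v x ∨
      (S \ fromEdgeSet {s(x, x')}).Reachable v x' := by
  induction p with
  | nil => exact Or.inl (Reachable.refl _)
  | @cons u a b h q ih =>
    by_cases hedge : s(u, a) = s(x, x')
    · rw [Sym2.eq_iff] at hedge
      rcases hedge with ⟨rfl, rfl⟩ | ⟨rfl, rfl⟩
      · exact Or.inr (Or.inl (Reachable.refl _))
      · exact Or.inr (Or.inr (Reachable.refl _))
    · have hadj : (S \ fromEdgeSet {s(x, x')}).Adj u a := by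
        rw [sdiff_adj, fromEdgeSet_adj]
        exact ⟨h, fun hc => hedge hc.1⟩
      rcases ih with h1 | h1 | h1
      · exact Or.inl (hadj.reachable.trans h1)
      · exact Or.inr (Or.inl (hadj.reachable.trans h1))
      · exact Or.inr (Or.inr (hadj.reachable.trans h1))

/-- If `x` and `x'` are still connected after removing edge `{x,x'}`, every walk transfers. -/
lemma reach_all {S : SimpleGraph X} {x x' : X}
    (hxx' : (S \ fromEdgeSet {s(x, x')}).Reachable x x') {v w : X} (p : S.Walk v w) :
    (S \ fromEdgeSet {s(x, x')}).Reachable v w := by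
  induction p with
  | nil => exact Reachable.refl _
  | @cons u a b h q ih =>
    by_cases hedge : s(u, a) = s(x, x')
    · rw [Sym2.eq_iff] at hedge
      rcases hedge with ⟨rfl, rfl⟩ | ⟨rfl, rfl⟩
      · exact hxx'.trans ih
      · exact hxx'.symm.trans ih
    · have hadj : (S \ fromEdgeSet {s(x, x')}).Adj u a := by
        rw [sdiff_adj, fromEdgeSet_adj]
        exact ⟨h, fun hc => hedge hc.1⟩
      exact hadj.reachable.trans ih

lemma edgeSet_sdiff_single {S : SimpleGraph X} {x x' : X} (h : S.Adj x x') :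
    (S \ fromEdgeSet {s(x, x')}).edgeSet = S.edgeSet \ {s(x, x')} := by
  rw [edgeSet_sdiff, edgeSet_fromEdgeSet]
  ext e
  simp only [Set.mem_diff, Set.mem_singleton_iff, Set.mem_setOf_eq, not_and, not_not]
  constructor
  · rintro ⟨he, h2⟩
    refine ⟨he, fun hc => ?_⟩
    subst hc
    exact h.ne (Sym2.mk_isDiag_iff.1 (h2 rfl))
  · rintro ⟨he, h2⟩
    exact ⟨he, fun hc => absurd hc h2⟩

/-- Nonbasic chain: each individual step is strictly shorter than `dist x x'`. -/
lemma chain_step_lt {x x' : X} {k : ℕ} {p : Fin (k + 2) → X} (hk : 1 ≤ k)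
    (hinj : Function.Injective p)
    (hsum : dist x x' = ∑ i : Fin (k + 1), dist (p i.castSucc) (p i.succ))
    (j : Fin (k + 1)) : dist (p j.castSucc) (p j.succ) < dist x x' := by
  have hpos : ∀ i : Fin (k + 1), 0 < dist (p i.castSucc) (p i.succ) := fun i =>
    dist_pos.2 (fun h => absurd (hinj h) (Fin.castSucc_lt_succ : i.castSucc < i.succ).ne)
  have hsplit : ∑ i ∈ (univ : Finset (Fin (k+1))).erase j, dist (p i.castSucc) (p i.succ)
      + dist (p j.castSucc) (p j.succ) = ∑ i : Fin (k + 1), dist (p i.castSucc) (p i.succ) :=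
    Finset.sum_erase_add _ _ (mem_univ j)
  have hne : ∃ i : Fin (k + 1), i ≠ j := by
    rcases eq_or_ne j 0 with rfl | hj
    · refine ⟨Fin.last k, ?_⟩
      simp only [ne_eq, Fin.ext_iff, Fin.val_last, Fin.val_zero]
      omega
    · exact ⟨0, fun h => hj h.symm⟩
  obtain ⟨i, hij⟩ := hne
  have hposerase : 0 < ∑ i ∈ (univ : Finset (Fin (k+1))).erase j,
      dist (p i.castSucc) (p i.succ) :=
    Finset.sum_pos' (fun i _ => (hpos i).le) ⟨i, Finset.mem_erase.2 ⟨hij, mem_univ i⟩, hpos i⟩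
  rw [hsum, ← hsplit]
  linarith

/-- The exchange lemma. -/
lemma exchange {S : SimpleGraph X} (hS : S.IsTree) {x x' : X} (he : S.Adj x x')
    (hc : IsNonBasicChain x x') : ∃ S2 : SimpleGraph X, S2.Connected ∧ W S2 < W S := by
  classical
  obtain ⟨k, p, hk, hinj, hp0, hpl, hsum⟩ := hc
  set T' := S \ fromEdgeSet {s(x, x')} with hT'
  -- the removed edge is a bridge
  have hbridge : ¬ T'.Reachable x x' := by
    have := (isAcyclic_iff_forall_adj_isBridge.1 hS.IsAcyclic) he
    exact isBridge_iff.1 this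
  -- find a flip along the chain
  have h0 : T'.Reachable x (p 0) := by rw [hp0]
  have hl : ¬ T'.Reachable x (p (Fin.last (k + 1))) := by rw [hpl]; exact hbridge
  obtain ⟨i, hA, hB⟩ := exists_flip (fun j => T'.Reachable x (p j)) h0 hl
  set a := p i.castSucc
  set b := p i.succ
  have hab : a ≠ b := fun h => hB (h ▸ hA)
  have hdab : dist a b < dist x x' := chain_step_lt hk hinj hsum i
  -- new graph
  set S2 := T' ⊔ fromEdgeSet {s(a, b)} with hS2
  have hT'le : T' ≤ S2 := le_sup_left
  have hadj_ab : S2.Adj a b := by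
    have h1 : (fromEdgeSet {s(a, b)}).Adj a b := (fromEdgeSet_adj _).2 ⟨rfl, hab⟩
    exact (le_sup_right : fromEdgeSet {s(a, b)} ≤ S2) h1
  -- reach from anything to x in S2
  have hbx' : T'.Reachable b x' := by
    obtain ⟨q⟩ := hS.isConnected.preconnected b x
    rcases reach_or x x' q with h1 | h1 | h1
    · exact absurd h1.symm hB
    · exact absurd h1.symm hB
    · exact h1
  have hx'x : S2.Reachable x' x :=
    ((hbx'.mono hT'le).symm.trans (hadj_ab.reachable.symm)).trans ((hA.mono hT'le).symm)
  have hconn : S2.Connected := by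
    rw [connected_iff]
    refine ⟨fun v w => ?_, hS.isConnected.nonempty⟩
    have key : ∀ u : X, S2.Reachable u x := by
      intro u
      obtain ⟨q⟩ := hS.isConnected.preconnected u x
      rcases reach_or x x' q with h1 | h1 | h1
      · exact h1.mono hT'le
      · exact h1.mono hT'le
      · exact (h1.mono hT'le).trans hx'x
    exact (key v).trans (key w).symm
  -- weights
  refine ⟨S2, hconn, ?_⟩
  have habT' : s(a, b) ∉ T'.edgeSet := by
    rw [SimpleGraph.mem_edgeSet]
    exact fun h => hB (hA.trans h.reachable)
  have hES2 : S2.edgeSet = T'.edgeSet ∪ {s(a, b)} := by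
    rw [hS2, edgeSet_sup, edgeSet_fromEdgeSet]
    congr 1
    ext e
    simp only [Set.mem_diff, Set.mem_singleton_iff, Set.mem_setOf_eq]
    constructor
    · rintro ⟨rfl, _⟩; rfl
    · rintro rfl; exact ⟨rfl, by simpa using hab⟩
  have hET' : T'.edgeSet = S.edgeSet \ {s(x, x')} := edgeSet_sdiff_single he
  -- Finset versions
  have hxx'mem : s(x, x') ∈ S.edgeSet.toFinite.toFinset := by
    rw [Set.Finite.mem_toFinset]
    exact (SimpleGraph.mem_edgeSet _).2 he
  have hfin2 : S2.edgeSet.toFinite.toFinset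
      = insert s(a, b) ((S.edgeSet.toFinite.toFinset).erase s(x, x')) := by
    apply Finset.coe_injective
    rw [Set.Finite.coe_toFinset, hES2, hET']
    simp only [Finset.coe_insert, Finset.coe_erase, Set.Finite.coe_toFinset]
    rw [Set.union_comm, Set.insert_eq]
  have habnotin : s(a, b) ∉ (S.edgeSet.toFinite.toFinset).erase s(x, x') := by
    intro hmem
    rw [Finset.mem_erase, Set.Finite.mem_toFinset] at hmem
    exact habT' (by rw [hET']; exact ⟨hmem.2, hmem.1⟩)
  rw [W, W, hfin2, Finset.sum_insert habnotin,
    Finset.sum_erase_eq_sub hxx'mem]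
  have h1 : dw s(a, b) = dist a b := by simp [dw]
  have h2 : dw s(x, x') = dist x x' := by simp [dw]
  rw [h1, h2]
  linarith

lemma acyclic_of_min {S : SimpleGraph X} (hS : S.Connected)
    (hmin : ∀ S' : SimpleGraph X, S'.Connected → W S ≤ W S') : S.IsAcyclic := by
  classical
  rw [isAcyclic_iff_forall_adj_isBridge]
  intro u v huv
  by_contra hbr
  rw [isBridge_iff] at hbr
  push_neg at hbr
  have hreach : (S \ fromEdgeSet {s(u, v)}).Reachable u v := hbr
  set S' := S \ fromEdgeSet {s(u, v)} with hS'
  have hconn : S'.Connected := by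
    rw [connected_iff]
    refine ⟨fun a b => ?_, hS.nonempty⟩
    obtain ⟨q⟩ := hS.preconnected a b
    exact reach_all hreach q
  have hmem : s(u, v) ∈ S.edgeSet.toFinite.toFinset := by
    rw [Set.Finite.mem_toFinset]
    exact (SimpleGraph.mem_edgeSet _).2 huv
  have hlt : W S' < W S := by
    have hfin : S'.edgeSet.toFinite.toFinset = (S.edgeSet.toFinite.toFinset).erase s(u, v) := by
      apply Finset.coe_injective
      rw [Set.Finite.coe_toFinset, edgeSet_sdiff_single huv]
      rw [Finset.coe_erase, Set.Finite.coe_toFinset]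
    rw [W, W, hfin, Finset.sum_erase_eq_sub hmem]
    have : (0 : ℝ) < dw s(u, v) := dw_pos ((SimpleGraph.mem_edgeSet _).2 huv)
    linarith
  exact absurd (hmin S' hconn) (not_le.2 hlt)

lemma min_eq_G (hG : (basicGeodesicGraph X).IsTree) {S : SimpleGraph X}
    (hS : S.Connected) (hmin : ∀ S' : SimpleGraph X, S'.Connected → W S ≤ W S') :
    S = basicGeodesicGraph X := by
  classical
  have hTree : S.IsTree := ⟨hS, acyclic_of_min hS hmin⟩
  have hsub : S.edgeSet ⊆ (basicGeodesicGraph X).edgeSet := by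
    intro e he
    induction e using Sym2.ind with
    | _ x x' =>
      rw [SimpleGraph.mem_edgeSet] at he ⊢
      show IsBasicEdge x x'
      by_contra hb
      have hnb : IsNonBasicEdge x x' := by
        rw [IsBasicEdge] at hb
        push_neg at hb
        exact hb he.ne
      have hex : ∃ S2 : SimpleGraph X, S2.Connected ∧ W S2 < W S := by
        rcases hnb with h | h
        · exact exchange hTree he h
        · exact exchange hTree he.symm h
      obtain ⟨S2, h1, h2⟩ := hex
      exact absurd (hmin S2 h1) (not_le.2 h2)
  have i1 : Fintype S.edgeSet := S.edgeSet.toFinite.fintype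
  have i2 : Fintype (basicGeodesicGraph X).edgeSet := (basicGeodesicGraph X).edgeSet.toFinite.fintype
  have hc1 : S.edgeFinset.card + 1 = Fintype.card X := hTree.card_edgeFinset
  have hc2 : (basicGeodesicGraph X).edgeFinset.card + 1 = Fintype.card X := hG.card_edgeFinset
  have hsubF : (basicGeodesicGraph X).edgeFinset ⊆ S.edgeFinset → True := fun _ => trivial
  have hsubF' : S.edgeFinset ⊆ (basicGeodesicGraph X).edgeFinset := by
    intro e heF
    rw [SimpleGraph.mem_edgeFinset] at heF ⊢
    exact hsub heF
  have hFeq : S.edgeFinset = (basicGeodesicGraph X).edgeFinset :=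
    Finset.eq_of_subset_of_card_le hsubF' (by omega)
  rw [← SimpleGraph.edgeSet_inj, ← SimpleGraph.coe_edgeFinset, ← SimpleGraph.coe_edgeFinset, hFeq]

end MstAux

/-- If the basic geodesic graph is a tree, it is the unique minimum spanning tree of
the weighted complete graph on `X`: any other spanning tree is strictly longer. -/
theorem basicGeodesicGraph_unique_mst
    {X : Type*} [MetricSpace X] [Fintype X] [Nonempty X]
    (hG : (basicGeodesicGraph X).IsTree)
    (T : SimpleGraph X) (hT : T.IsTree)
    (hne : T.edgeSet ≠ (basicGeodesicGraph X).edgeSet) :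
    ∑ᶠ e ∈ (basicGeodesicGraph X).edgeSet,
        Sym2.lift ⟨dist, fun a b => dist_comm a b⟩ e <
      ∑ᶠ e ∈ T.edgeSet, Sym2.lift ⟨dist, fun a b => dist_comm a b⟩ e := by
  classical
  rw [MstAux.finsum_eq_W, MstAux.finsum_eq_W]
  have hfin : Finite {S : SimpleGraph X // S.Connected} := Subtype.finite
  have hnonempty : Nonempty {S : SimpleGraph X // S.Connected} := ⟨⟨_, hG.isConnected⟩⟩
  obtain ⟨⟨M, hM⟩, hminS⟩ :=
    Finite.exists_min (fun S : {S : SimpleGraph X // S.Connected} => MstAux.W S.1)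
  have hmin : ∀ S' : SimpleGraph X, S'.Connected → MstAux.W M ≤ MstAux.W S' :=
    fun S' h => hminS ⟨S', h⟩
  have hMG : M = basicGeodesicGraph X := MstAux.min_eq_G hG hM hmin
  have hle : MstAux.W (basicGeodesicGraph X) ≤ MstAux.W T := hMG ▸ hmin T hT.isConnected
  rcases lt_or_eq_of_le hle with h | h
  · exact h
  · exfalso
    have hmin' : ∀ S' : SimpleGraph X, S'.Connected → MstAux.W T ≤ MstAux.W S' := by
      intro S' hS'
      rw [← h, ← hMG]
      exact hmin S' hS'
    have := MstAux.min_eq_G hG hT.isConnected hmin'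
    exact hne (by rw [this])
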